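/- The endomorphism semiring End_S(M) of any cyclic congruence-simple right S-semimodule M is either a division ring or isomorphic to the Boolean semifield 𝔹 = ({0,1}, max, min). -/

import Mathlib

/-- The Boolean semifield `𝔹 = ({0,1}, max, min)`. -/
inductive Bsf : Type
  | zero
  | one
  deriving DecidableEq

instance : Fintype Bsf := ⟨{Bsf.zero, Bsf.one}, fun x => by cases x <;> simp⟩

instance : Zero Bsf := ⟨.zero⟩
instance : One Bsf := ⟨.one⟩
instance : Add Bsf := ⟨fun a b => match a, b with | .zero, x => x | .one, _ => .one⟩
instance : Mul Bsf := ⟨fun a b => match a, b with | .zero, _ => .zero | .one, x => x⟩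

instance : CommSemiring Bsf where
  nsmul := nsmulRec
  add_assoc := by decide
  zero_add := by decide
  add_zero := by decide
  add_comm := by decide
  mul_assoc := by decide
  one_mul := by decide
  mul_one := by decide
  left_distrib := by decide
  right_distrib := by decide
  zero_mul := by decide
  mul_zero := by decide
  mul_comm := by decide

/-- A congruence on a (left) `S`-semimodule `M`. -/
def IsModCon (S : Type) {M : Type} [Semiring S] [AddCommMonoid M] [Module S M]
    (r : M → M → Prop) : Prop :=
  Equivalence r ∧ (∀ a b c d : M, r a b → r c d → r (a + c) (b + d)) ∧
    ∀ (s : S) (a b : M), r a b → r (s • a) (s • b)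

/-- `M` is congruence-simple. -/
def CongSimple (S M : Type) [Semiring S] [AddCommMonoid M] [Module S M] : Prop :=
  (∃ m : M, m ≠ 0) ∧
    ∀ r : M → M → Prop, IsModCon S r → (∀ a b, r a b ↔ a = b) ∨ (∀ a b, r a b)

section
variable {S M : Type} [Semiring S] [AddCommMonoid M] [Module S M]

-- zerosumfree + cyclic + cong-simple ⇒ additively idempotent
lemma idem_of_zsf (hcs : CongSimple S M) (m : M) (hm : ∀ x : M, ∃ s : S, s • m = x)
    (hzsf : ∀ a b : M, a + b = 0 → a = 0) : ∀ a : M, a + a = a := by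
  have hzsf' : ∀ a b : M, a + b = 0 → b = 0 := fun a b h => hzsf b a (by rwa [add_comm])
  set r : M → M → Prop := fun a b => ∀ s : S, s • a = s • b ∨ (s • a ≠ 0 ∧ s • b ≠ 0) with hr
  have hcon : IsModCon S r := by
    refine ⟨⟨fun a s => Or.inl rfl, ?_, ?_⟩, ?_, ?_⟩
    · intro a b h s; rcases h s with h | h
      · exact Or.inl h.symm
      · exact Or.inr ⟨h.2, h.1⟩
    · intro a b c h1 h2 s
      rcases h1 s with h1 | h1 <;> rcases h2 s with h2 | h2
      · exact Or.inl (h1.trans h2)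
      · exact Or.inr ⟨h1 ▸ h2.1, h2.2⟩
      · exact Or.inr ⟨h1.1, h2 ▸ h1.2⟩
      · exact Or.inr ⟨h1.1, h2.2⟩
    · intro a b c d h1 h2 s
      rcases h1 s with h1 | h1 <;> rcases h2 s with h2 | h2
      · exact Or.inl (by rw [smul_add, smul_add, h1, h2])
      · exact Or.inr ⟨by rw [smul_add]; exact fun hc => h2.1 (hzsf' _ _ hc),
          by rw [smul_add]; exact fun hc => h2.2 (hzsf' _ _ hc)⟩
      · exact Or.inr ⟨by rw [smul_add]; exact fun hc => h1.1 (hzsf _ _ hc),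
          by rw [smul_add]; exact fun hc => h1.2 (hzsf _ _ hc)⟩
      · exact Or.inr ⟨by rw [smul_add]; exact fun hc => h1.1 (hzsf _ _ hc),
          by rw [smul_add]; exact fun hc => h1.2 (hzsf _ _ hc)⟩
    · intro s a b h t
      rcases h (t * s) with h | h
      · exact Or.inl (by rw [smul_smul, smul_smul, h])
      · exact Or.inr ⟨by rw [smul_smul]; exact h.1, by rw [smul_smul]; exact h.2⟩
  rcases hcs.2 _ hcon with htriv | htot
  · intro a
    refine ((htriv (a + a) a).1 ?_).symm ▸ rfl
    intro s
    by_cases hs : s • a = 0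
    · exact Or.inl (by rw [smul_add, hs, add_zero])
    · exact Or.inr ⟨by rw [smul_add]; exact fun hc => hs (hzsf _ _ hc), hs⟩
  · exfalso
    obtain ⟨x0, hx0⟩ := hcs.1
    obtain ⟨s, hs⟩ := hm x0
    have := htot m 0
    rcases this s with h | h
    · rw [smul_zero] at h; exact hx0 (hs ▸ h)
    · exact h.2 (smul_zero s)
end


section
variable {S M : Type} [Semiring S] [AddCommMonoid M] [Module S M]

-- basic order lemmas, le a b := a + b = b
lemma ltrans {a b c : M} (h1 : a + b = b) (h2 : b + c = c) : a + c = c := by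
  rw [← h2, ← add_assoc, h1]

lemma ladd {a b c d : M} (h1 : a + b = b) (h2 : c + d = d) : (a + c) + (b + d) = b + d := by
  calc (a + c) + (b + d) = (a + b) + (c + d) := by rw [add_add_add_comm]
  _ = b + d := by rw [h1, h2]

lemma lmono (g : Module.End S M) {a b : M} (h : a + b = b) : g a + g b = g b := by
  rw [← map_add, h]

lemma lsmul (s : S) {a b : M} (h : a + b = b) : s • a + s • b = s • b := by
  rw [← smul_add, h]
end

section
variable {S M : Type} [Semiring S] [AddCommMonoid M] [Module S M]

lemma pow_apply_succ (g : Module.End S M) (n : ℕ) (x : M) : (g^(n+1)) x = (g^n) (g x) := by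
  rw [pow_succ]; rfl

lemma le_one (hcs : CongSimple S M) (hidem : ∀ a : M, a + a = a)
    (f : Module.End S M) : ∀ x : M, f x + x = x := by
  obtain ⟨x0, hx0⟩ := hcs.1
  set h : Module.End S M := 1 + f with hh
  have happ : ∀ x : M, h x = x + f x := fun x => rfl
  have hxh : ∀ x : M, x + h x = h x := by
    intro x; rw [happ, ← add_assoc, hidem]
  have hge : ∀ (n : ℕ) (x : M), x + (h^n) x = (h^n) x := by
    intro n
    induction n with
    | zero => intro x; rw [pow_zero]; exact hidem x
    | succ n ih =>
      intro x
      rw [pow_apply_succ]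
      exact ltrans (hxh x) (ih (h x))
  have hlift : ∀ {a b : M} (n N : ℕ), n ≤ N → b + (h^n) a = (h^n) a →
      b + (h^N) a = (h^N) a := by
    intro a b n N hn hab
    obtain ⟨k, rfl⟩ := Nat.le.dest hn
    rw [add_comm n k, pow_add, Module.End.mul_apply]
    exact ltrans hab (hge k ((h^n) a))
  set r : M → M → Prop :=
    fun a b => (∃ n, b + (h^n) a = (h^n) a) ∧ (∃ k, a + (h^k) b = (h^k) b) with hr
  have hcon : IsModCon S r := by
    refine ⟨⟨fun a => ⟨⟨0, by rw [pow_zero]; exact hidem a⟩, ⟨0, by rw [pow_zero]; exact hidem a⟩⟩,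
      fun hab => ⟨hab.2, hab.1⟩, ?_⟩, ?_, ?_⟩
    · rintro a b c ⟨⟨n, hn⟩, ⟨k, hk⟩⟩ ⟨⟨p, hp⟩, ⟨q, hq⟩⟩
      constructor
      · refine ⟨p + n, ?_⟩
        rw [pow_add, Module.End.mul_apply]
        exact ltrans hp (lmono (h^p) hn)
      · refine ⟨k + q, ?_⟩
        rw [pow_add, Module.End.mul_apply]
        exact ltrans hk (lmono (h^k) hq)
    · rintro a b c d ⟨⟨n, hn⟩, ⟨k, hk⟩⟩ ⟨⟨p, hp⟩, ⟨q, hq⟩⟩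
      constructor
      · refine ⟨n + p, ?_⟩
        rw [map_add]
        exact ladd (hlift n (n+p) (Nat.le_add_right n p) hn)
          (hlift p (n+p) (Nat.le_add_left p n) hp)
      · refine ⟨k + q, ?_⟩
        rw [map_add]
        exact ladd (hlift k (k+q) (Nat.le_add_right k q) hk)
          (hlift q (k+q) (Nat.le_add_left q k) hq)
    · rintro s a b ⟨⟨n, hn⟩, ⟨k, hk⟩⟩
      exact ⟨⟨n, by rw [map_smul]; exact lsmul s hn⟩,
        ⟨k, by rw [map_smul]; exact lsmul s hk⟩⟩
  rcases hcs.2 _ hcon with htriv | htot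
  · intro x
    have : x = h x := (htriv x (h x)).1
      ⟨⟨1, by rw [pow_one]; exact hidem (h x)⟩, ⟨0, by rw [pow_zero]; exact hxh x⟩⟩
    rw [add_comm]
    conv_rhs => rw [this, happ]
  · exfalso
    obtain ⟨n, hn⟩ := (htot x0 0).2
    rw [map_zero, add_zero] at hn
    exact hx0 hn
end

section
variable {S M : Type} [Semiring S] [AddCommMonoid M] [Module S M]

lemma injective_of_ne_zero (hcs : CongSimple S M) (f : Module.End S M) (hf : f ≠ 0) :
    Function.Injective f := by
  have hcon : IsModCon S (fun a b : M => f a = f b) := by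
    refine ⟨⟨fun a => rfl, fun h => h.symm, fun h1 h2 => h1.trans h2⟩, ?_, ?_⟩
    · intro a b c d h1 h2; simp only [map_add, h1, h2]
    · intro s a b h; simp only [map_smul, h]
  rcases hcs.2 _ hcon with htriv | htot
  · intro a b h; exact (htriv a b).1 h
  · exact absurd (LinearMap.ext fun a => ((htot a 0).trans (map_zero f)).trans
      (LinearMap.zero_apply a).symm) hf

lemma eq_one_of_ne_zero (hcs : CongSimple S M) (hidem : ∀ a : M, a + a = a)
    (f : Module.End S M) (hf : f ≠ 0) : f = 1 := by
  obtain ⟨x0, hx0⟩ := hcs.1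
  have hinj := injective_of_ne_zero hcs f hf
  have hdec : ∀ (g : Module.End S M) (x : M), g x + x = x := fun g => le_one hcs hidem g
  have fdle : ∀ (n : ℕ) (x : M), (f^n) x + x = x := by
    intro n
    induction n with
    | zero => intro x; rw [pow_zero]; exact hidem x
    | succ n ih =>
      intro x
      rw [pow_apply_succ]
      exact ltrans (ih (f x)) (hdec f x)
  have flift : ∀ {a b : M} (n N : ℕ), n ≤ N → (f^n) a + b = b → (f^N) a + b = b := by
    intro a b n N hn hab
    obtain ⟨k, rfl⟩ := Nat.le.dest hn
    rw [add_comm n k, pow_add, Module.End.mul_apply]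
    exact ltrans (fdle k ((f^n) a)) hab
  set r : M → M → Prop :=
    fun a b => (∃ n, (f^n) a + b = b) ∧ (∃ k, (f^k) b + a = a) with hr
  have hcon : IsModCon S r := by
    refine ⟨⟨fun a => ⟨⟨0, by rw [pow_zero]; exact hidem a⟩, ⟨0, by rw [pow_zero]; exact hidem a⟩⟩,
      fun hab => ⟨hab.2, hab.1⟩, ?_⟩, ?_, ?_⟩
    · rintro a b c ⟨⟨n, hn⟩, ⟨k, hk⟩⟩ ⟨⟨p, hp⟩, ⟨q, hq⟩⟩
      constructor
      · refine ⟨p + n, ?_⟩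
        rw [pow_add, Module.End.mul_apply]
        exact ltrans (lmono (f^p) hn) hp
      · refine ⟨k + q, ?_⟩
        rw [pow_add, Module.End.mul_apply]
        exact ltrans (lmono (f^k) hq) hk
    · rintro a b c d ⟨⟨n, hn⟩, ⟨k, hk⟩⟩ ⟨⟨p, hp⟩, ⟨q, hq⟩⟩
      constructor
      · refine ⟨n + p, ?_⟩
        rw [map_add]
        exact ladd (flift n (n+p) (Nat.le_add_right n p) hn)
          (flift p (n+p) (Nat.le_add_left p n) hp)
      · refine ⟨k + q, ?_⟩
        rw [map_add]
        exact ladd (flift k (k+q) (Nat.le_add_right k q) hk)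
          (flift q (k+q) (Nat.le_add_left q k) hq)
    · rintro s a b ⟨⟨n, hn⟩, ⟨k, hk⟩⟩
      exact ⟨⟨n, by rw [map_smul]; exact lsmul s hn⟩,
        ⟨k, by rw [map_smul]; exact lsmul s hk⟩⟩
  rcases hcs.2 _ hcon with htriv | htot
  · refine LinearMap.ext fun x => ?_
    have : x = f x := (htriv x (f x)).1
      ⟨⟨1, by rw [pow_one]; exact hidem (f x)⟩, ⟨0, by rw [pow_zero]; exact hdec f x⟩⟩
    rw [Module.End.one_apply]
    exact this.symm
  · exfalso
    have hpz : ∀ (n : ℕ) (y : M), (f^n) y = 0 → y = 0 := by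
      intro n
      induction n with
      | zero => intro y hy; rwa [pow_zero] at hy
      | succ n ih =>
        intro y hy
        rw [pow_apply_succ] at hy
        exact hinj (by rw [ih (f y) hy, map_zero])
    obtain ⟨n, hn⟩ := (htot x0 0).1
    rw [add_zero] at hn
    exact hx0 (hpz n x0 hn)
end

section
variable {S M : Type} [Semiring S] [AddCommMonoid M] [Module S M]

lemma group_case (hcs : CongSimple S M) (hinv : ∀ a : M, ∃ b, a + b = 0) :
    (∀ f : Module.End S M, ∃ g : Module.End S M, f + g = 0) ∧
      (0 : Module.End S M) ≠ 1 ∧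
      (∀ f : Module.End S M, f ≠ 0 → ∃ g : Module.End S M, f * g = 1 ∧ g * f = 1) := by
  classical
  obtain ⟨x0, hx0⟩ := hcs.1
  have huniq : ∀ a b c : M, a + b = 0 → a + c = 0 → b = c := by
    intro a b c h1 h2
    calc b = b + (a + c) := by rw [h2, add_zero]
    _ = (a + b) + c := by rw [add_comm a b, add_assoc]
    _ = c := by rw [h1, zero_add]
  set neg : M → M := fun a => Classical.choose (hinv a) with hnegdef
  have hneg : ∀ a : M, a + neg a = 0 := fun a => Classical.choose_spec (hinv a)
  have hnegadd : ∀ x y : M, neg (x + y) = neg x + neg y := by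
    intro x y
    refine huniq (x + y) _ _ (hneg _) ?_
    rw [add_add_add_comm, hneg, hneg, add_zero]
  have hnegsmul : ∀ (s : S) (x : M), neg (s • x) = s • neg x := by
    intro s x
    refine huniq (s • x) _ _ (hneg _) ?_
    rw [← smul_add, hneg, smul_zero]
  refine ⟨?_, ?_, ?_⟩
  · intro f
    refine ⟨⟨⟨fun x => neg (f x), ?_⟩, ?_⟩, ?_⟩
    · intro x y; simp only [map_add]; exact hnegadd _ _
    · intro s x; simp only [map_smul, RingHom.id_apply]; exact hnegsmul _ _
    · refine LinearMap.ext fun x => ?_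
      simp only [LinearMap.add_apply, LinearMap.zero_apply, LinearMap.coe_mk, AddHom.coe_mk]
      exact hneg (f x)
  · intro h
    have := LinearMap.ext_iff.1 h x0
    simp only [LinearMap.zero_apply, Module.End.one_apply] at this
    exact hx0 this.symm
  · intro f hf
    have hinj := injective_of_ne_zero hcs f hf
    have hfneg : ∀ u : M, f (neg u) = neg (f u) := by
      intro u
      refine (huniq (f u) _ _ (hneg (f u)) ?_).symm
      rw [← map_add, hneg, map_zero]
    set rr : M → M → Prop := fun a b => ∃ u v : M, a + f u = b + f v with hrr
    have hcon : IsModCon S rr := by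
      refine ⟨⟨fun a => ⟨0, 0, rfl⟩, fun ⟨u, v, h⟩ => ⟨v, u, h.symm⟩, ?_⟩, ?_, ?_⟩
      · rintro a b c ⟨u, v, h1⟩ ⟨p, q, h2⟩
        refine ⟨u + p, v + q, ?_⟩
        calc a + f (u + p) = (a + f u) + f p := by rw [map_add, add_assoc]
        _ = (b + f p) + f v := by rw [h1, add_right_comm]
        _ = (c + f q) + f v := by rw [h2]
        _ = c + f (v + q) := by rw [map_add, add_assoc, add_comm (f v)]
      · rintro a b c d ⟨u, v, h1⟩ ⟨p, q, h2⟩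
        refine ⟨u + p, v + q, ?_⟩
        rw [map_add, map_add, add_add_add_comm, h1, h2, add_add_add_comm]
      · rintro s a b ⟨u, v, h⟩
        refine ⟨s • u, s • v, ?_⟩
        rw [map_smul, map_smul, ← smul_add, ← smul_add, h]
    rcases hcs.2 _ hcon with htriv | htot
    · exfalso
      refine hf (LinearMap.ext fun x => ?_)
      have : rr (f x) 0 := ⟨0, x, by rw [map_zero, add_zero, zero_add]⟩
      simpa using (htriv _ _).1 this
    · have hsurj : ∀ a : M, ∃ x, f x = a := by
        intro a
        obtain ⟨u, v, h⟩ := htot a 0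
        rw [zero_add] at h
        refine ⟨v + neg u, ?_⟩
        rw [map_add, hfneg, ← h, add_assoc, hneg, add_zero]
      set g0 : M → M := fun a => Classical.choose (hsurj a) with hg0def
      have hg0 : ∀ a : M, f (g0 a) = a := fun a => Classical.choose_spec (hsurj a)
      refine ⟨⟨⟨fun a => g0 a, ?_⟩, ?_⟩, ?_, ?_⟩
      · intro x y
        refine hinj ?_
        rw [map_add, hg0, hg0, hg0]
      · intro s x
        refine hinj ?_
        simp only [RingHom.id_apply]
        rw [map_smul, hg0, hg0]
      · refine LinearMap.ext fun a => ?_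
        simp only [Module.End.mul_apply, Module.End.one_apply, LinearMap.coe_mk, AddHom.coe_mk]
        exact hg0 a
      · refine LinearMap.ext fun x => ?_
        simp only [Module.End.mul_apply, Module.End.one_apply, LinearMap.coe_mk, AddHom.coe_mk]
        exact hinj (hg0 (f x))
end

/-- The endomorphism semiring of a cyclic congruence-simple `S`-semimodule is either
a division ring or (isomorphic to) the Boolean semifield `𝔹`. -/
theorem end_of_cyclic_congSimple (S M : Type) [Semiring S] [AddCommMonoid M] [Module S M]
    (hcyc : ∃ m : M, ∀ x : M, ∃ s : S, s • m = x) (hcs : CongSimple S M) :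
    ((∀ f : Module.End S M, ∃ g : Module.End S M, f + g = 0) ∧
      (0 : Module.End S M) ≠ 1 ∧
      (∀ f : Module.End S M, f ≠ 0 → ∃ g : Module.End S M, f * g = 1 ∧ g * f = 1))
    ∨ Nonempty (Module.End S M ≃+* Bsf) := by
  classical
  obtain ⟨m, hm⟩ := hcyc
  obtain ⟨x0, hx0⟩ := hcs.1
  have hσ : IsModCon S (fun a b : M => (∃ x, b + x = a) ∧ (∃ y, a + y = b)) := by
    refine ⟨⟨fun a => ⟨⟨0, add_zero a⟩, ⟨0, add_zero a⟩⟩, fun h => ⟨h.2, h.1⟩, ?_⟩, ?_, ?_⟩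
    · rintro a b c ⟨⟨x, hx⟩, ⟨y, hy⟩⟩ ⟨⟨u, hu⟩, ⟨v, hv⟩⟩
      exact ⟨⟨u + x, by rw [← add_assoc, hu, hx]⟩, ⟨y + v, by rw [← add_assoc, hy, hv]⟩⟩
    · rintro a b c d ⟨⟨x, hx⟩, ⟨y, hy⟩⟩ ⟨⟨u, hu⟩, ⟨v, hv⟩⟩
      exact ⟨⟨x + u, by rw [add_add_add_comm, hx, hu]⟩,
        ⟨y + v, by rw [add_add_add_comm, hy, hv]⟩⟩
    · rintro s a b ⟨⟨x, hx⟩, ⟨y, hy⟩⟩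
      exact ⟨⟨s • x, by rw [← smul_add, hx]⟩, ⟨s • y, by rw [← smul_add, hy]⟩⟩
  rcases hcs.2 _ hσ with htriv | htot
  · right
    have hzsf : ∀ a b : M, a + b = 0 → a = 0 := fun a b h =>
      (htriv a 0).1 ⟨⟨a, zero_add a⟩, ⟨b, h⟩⟩
    have hidem := idem_of_zsf hcs m hm hzsf
    have h10 : (1 : Module.End S M) ≠ 0 := by
      intro h
      have := LinearMap.ext_iff.1 h x0
      simp only [Module.End.one_apply, LinearMap.zero_apply] at this
      exact hx0 this
    have heo : ∀ f : Module.End S M, f = 0 ∨ f = 1 := fun f =>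
      (em (f = 0)).imp id (eq_one_of_ne_zero hcs hidem f)
    have hzz : (if (0 : Module.End S M) = 0 then Bsf.zero else Bsf.one) = Bsf.zero :=
      if_pos rfl
    have hoo : (if (1 : Module.End S M) = 0 then Bsf.zero else Bsf.one) = Bsf.one :=
      if_neg h10
    have h11 : (1 + 1 : Module.End S M) = 1 :=
      LinearMap.ext fun x => by
        simp only [LinearMap.add_apply, Module.End.one_apply]; exact hidem x
    refine ⟨⟨⟨fun f => if f = 0 then Bsf.zero else Bsf.one,
      fun b => match b with
        | Bsf.zero => 0
        | Bsf.one => 1,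
      ?_, ?_⟩, ?_, ?_⟩⟩
    · intro f
      rcases heo f with rfl | rfl
      · dsimp only; rw [hzz]
      · dsimp only; rw [hoo]
    · intro b
      cases b
      · dsimp only; rw [hzz]
      · dsimp only; rw [hoo]
    · intro f g
      rcases heo f with rfl | rfl <;> rcases heo g with rfl | rfl <;> dsimp only
      · rw [mul_zero, hzz]; decide
      · rw [zero_mul, hzz, hoo]; decide
      · rw [mul_zero, hzz, hoo]; decide
      · rw [one_mul, hoo]; decide
    · intro f g
      rcases heo f with rfl | rfl <;> rcases heo g with rfl | rfl <;> dsimp only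
      · rw [add_zero, hzz]; decide
      · rw [zero_add, hzz, hoo]; decide
      · rw [add_zero, hzz, hoo]; decide
      · rw [h11, hoo]; decide
  · left
    exact group_case hcs fun a => (htot a 0).2
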